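/- Let V be a free A-module of rank r and let p : V → B be a surjective A-linear map. Then any elements e_0, …, e_{r−1} ∈ V with p(e_k) = w^k for 0 ≤ k ≤ r−1 form an A-basis of V. -/

import Mathlib

open Polynomial TensorProduct

noncomputable section

/-- The ring `A = ℂ[z]/(z^m)`. -/
def Amod (m : ℕ) : Type :=
  Polynomial ℂ ⧸ Ideal.span {(Polynomial.X : Polynomial ℂ) ^ m}

instance (m : ℕ) : CommRing (Amod m) :=
  inferInstanceAs (CommRing (Polynomial ℂ ⧸ Ideal.span {(Polynomial.X : Polynomial ℂ) ^ m}))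

instance (m : ℕ) : Algebra ℂ (Amod m) :=
  inferInstanceAs (Algebra ℂ (Polynomial ℂ ⧸ Ideal.span {(Polynomial.X : Polynomial ℂ) ^ m}))

/-- The ring `B = ℂ[w]/(w^N)` with `N = m*r - r + 1`. -/
def Bmod (m r : ℕ) : Type :=
  Polynomial ℂ ⧸ Ideal.span {(Polynomial.X : Polynomial ℂ) ^ (m * r - r + 1)}

instance (m r : ℕ) : CommRing (Bmod m r) :=
  inferInstanceAs
    (CommRing (Polynomial ℂ ⧸ Ideal.span {(Polynomial.X : Polynomial ℂ) ^ (m * r - r + 1)}))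

instance (m r : ℕ) : Algebra ℂ (Bmod m r) :=
  inferInstanceAs
    (Algebra ℂ (Polynomial ℂ ⧸ Ideal.span {(Polynomial.X : Polynomial ℂ) ^ (m * r - r + 1)}))

/-- The class of a polynomial in `A = ℂ[z]/(z^m)`. -/
def Amod.mk (m : ℕ) (p : Polynomial ℂ) : Amod m :=
  (Ideal.Quotient.mk (Ideal.span {(Polynomial.X : Polynomial ℂ) ^ m}) p : _)

/-- The class of a polynomial in `B = ℂ[w]/(w^N)`. -/
def Bmod.mk (m r : ℕ) (p : Polynomial ℂ) : Bmod m r :=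
  (Ideal.Quotient.mk (Ideal.span {(Polynomial.X : Polynomial ℂ) ^ (m * r - r + 1)}) p : _)

/-- The element `z ∈ A`. -/
def Amod.z (m : ℕ) : Amod m := Amod.mk m Polynomial.X

/-- The element `w ∈ B`. -/
def Bmod.w (m r : ℕ) : Bmod m r := Bmod.mk m r Polynomial.X

/-- The coefficient of `w^j` in the unique polynomial representative of degree `< N` of an
element of `B = ℂ[w]/(w^N)` (for `j < N`). -/
noncomputable def Bmod.coeff (m r : ℕ) (j : ℕ) (b : Bmod m r) : ℂ :=
  ((Quotient.out
      (show Polynomial ℂ ⧸ Ideal.span {(Polynomial.X : Polynomial ℂ) ^ (m * r - r + 1)} from b))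
      %ₘ (Polynomial.X ^ (m * r - r + 1))).coeff j

/-- The canonical map `ℂ[z]/(z^m) → ℂ[w]/(w^N)`, `z ↦ w^r` (raw version). -/
noncomputable def AtoB0 (m r : ℕ) [NeZero m] :
    (Polynomial ℂ ⧸ Ideal.span {(Polynomial.X : Polynomial ℂ) ^ m}) →+*
      (Polynomial ℂ ⧸ Ideal.span {(Polynomial.X : Polynomial ℂ) ^ (m * r - r + 1)}) :=
  Ideal.Quotient.lift (Ideal.span {(Polynomial.X : Polynomial ℂ) ^ m})
    ((Ideal.Quotient.mk (Ideal.span {(Polynomial.X : Polynomial ℂ) ^ (m * r - r + 1)})).comp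
      (if 1 ≤ r then (Polynomial.aeval ((Polynomial.X : Polynomial ℂ) ^ r)).toRingHom
       else (Polynomial.aeval (0 : Polynomial ℂ)).toRingHom))
    (by
      intro a ha
      rw [Ideal.mem_span_singleton] at ha
      obtain ⟨c, rfl⟩ := ha
      rw [map_mul]
      apply mul_eq_zero_of_left
      have hm : 1 ≤ m := Nat.one_le_iff_ne_zero.mpr (NeZero.ne m)
      by_cases h : 1 ≤ r
      · rw [if_pos h, map_pow, RingHom.comp_apply, AlgHom.toRingHom_eq_coe, RingHom.coe_coe,
          Polynomial.aeval_X, ← map_pow, ← pow_mul, Ideal.Quotient.eq_zero_iff_mem,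
          Ideal.mem_span_singleton]
        have h1 : r ≤ r * m := Nat.le_mul_of_pos_right r (by omega)
        have h2 : m * r = r * m := Nat.mul_comm m r
        exact pow_dvd_pow _ (by omega)
      · rw [if_neg h, map_pow, RingHom.comp_apply, AlgHom.toRingHom_eq_coe, RingHom.coe_coe,
          Polynomial.aeval_X, map_zero, zero_pow (NeZero.ne m)])

/-- The canonical map `A → B`, `z ↦ w^r`. -/
noncomputable def AtoB (m r : ℕ) [NeZero m] : Amod m →+* Bmod m r := AtoB0 m r

noncomputable instance (m r : ℕ) [NeZero m] : Algebra (Amod m) (Bmod m r) :=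
  (AtoB m r).toAlgebra


namespace S8

/-- Evaluation at `0`, i.e. the residue map `A → ℂ`. -/
noncomputable def eps (m : ℕ) [NeZero m] : Amod m →+* ℂ :=
  Ideal.Quotient.lift (Ideal.span {(Polynomial.X : Polynomial ℂ) ^ m})
    (Polynomial.evalRingHom 0)
    (by
      intro a ha
      rw [Ideal.mem_span_singleton] at ha
      obtain ⟨c, rfl⟩ := ha
      simp [zero_pow (NeZero.ne m)])

lemma eps_mk (m : ℕ) [NeZero m] (p : Polynomial ℂ) :
    eps m (Amod.mk m p) = p.eval 0 :=
  Ideal.Quotient.lift_mk _ _ _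

lemma eps_algebraMap (m : ℕ) [NeZero m] (s : ℂ) :
    eps m (algebraMap ℂ (Amod m) s) = s := by
  have h : algebraMap ℂ (Amod m) s = Amod.mk m (C s) := rfl
  rw [h, eps_mk]; simp

lemma algebraMap_eq_mk_C (m : ℕ) (s : ℂ) :
    algebraMap ℂ (Amod m) s = Amod.mk m (C s) := rfl

lemma mk_surj (m : ℕ) (a : Amod m) : ∃ p : Polynomial ℂ, Amod.mk m p = a :=
  Ideal.Quotient.mk_surjective a

lemma isUnit_of_eps_ne_zero {m : ℕ} [NeZero m] {a : Amod m} (h : eps m a ≠ 0) :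
    IsUnit a := by
  obtain ⟨p, rfl⟩ := mk_surj m a
  rw [eps_mk] at h
  set c : ℂ := p.coeff 0 with hc
  have hc0 : c ≠ 0 := by rwa [hc, Polynomial.coeff_zero_eq_eval_zero]
  have hx : (X : Polynomial ℂ) ∣ (p - C c) := by
    rw [Polynomial.X_dvd_iff]; simp [hc]
  obtain ⟨q, hq⟩ := hx
  have hp : p = C c + X * q := by rw [← hq]; ring
  rw [hp]
  show IsUnit (Amod.mk m (C c + X * q))
  unfold Amod.mk
  rw [map_add, map_mul]
  have hnilX : IsNilpotent (Ideal.Quotient.mk (Ideal.span {(X : Polynomial ℂ) ^ m}) X) :=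
    ⟨m, by rw [← map_pow, Ideal.Quotient.eq_zero_iff_mem]; exact Ideal.mem_span_singleton_self _⟩
  have hnil : IsNilpotent (Ideal.Quotient.mk (Ideal.span {(X : Polynomial ℂ) ^ m}) X *
      Ideal.Quotient.mk (Ideal.span {(X : Polynomial ℂ) ^ m}) q) :=
    Commute.isNilpotent_mul_right (Commute.all _ _) hnilX
  have hu : IsUnit (Ideal.Quotient.mk (Ideal.span {(X : Polynomial ℂ) ^ m}) (C c)) :=
    (Polynomial.isUnit_C.mpr (isUnit_iff_ne_zero.mpr hc0)).map _
  exact hnil.isUnit_add_left_of_commute hu (Commute.all _ _)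

lemma exists_eq_z_mul {m : ℕ} [NeZero m] {a : Amod m} (h : eps m a = 0) :
    ∃ b, a = Amod.z m * b := by
  obtain ⟨p, rfl⟩ := mk_surj m a
  rw [eps_mk] at h
  have hx : (X : Polynomial ℂ) ∣ p := by
    rw [Polynomial.X_dvd_iff, Polynomial.coeff_zero_eq_eval_zero]; exact h
  obtain ⟨q, rfl⟩ := hx
  exact ⟨Amod.mk m q, map_mul _ _ _⟩

lemma Bmk_surj (m r : ℕ) (b : Bmod m r) : ∃ p : Polynomial ℂ, Bmod.mk m r p = b :=
  Ideal.Quotient.mk_surjective b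

lemma Bmk_pow_w (m r : ℕ) (k : ℕ) : Bmod.w m r ^ k = Bmod.mk m r (X ^ k) := by
  unfold Bmod.w Bmod.mk
  rw [map_pow]
  rfl

lemma AtoB_mk (m r : ℕ) [NeZero m] (hr : 1 ≤ r) (p : Polynomial ℂ) :
    AtoB m r (Amod.mk m p) = Bmod.mk m r (Polynomial.aeval ((X : Polynomial ℂ) ^ r) p) := by
  show AtoB0 m r (Amod.mk m p) = _
  unfold AtoB0 Amod.mk Bmod.mk
  rw [Ideal.Quotient.lift_mk, if_pos hr]
  rfl

lemma AtoB_z (m r : ℕ) [NeZero m] (hr : 1 ≤ r) :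
    AtoB m r (Amod.z m) = Bmod.w m r ^ r := by
  rw [Amod.z, AtoB_mk m r hr, Bmk_pow_w]
  simp

lemma AtoB_algebraMap (m r : ℕ) [NeZero m] (hr : 1 ≤ r) (s : ℂ) :
    AtoB m r (algebraMap ℂ (Amod m) s) = Bmod.mk m r (C s) := by
  rw [algebraMap_eq_mk_C, AtoB_mk m r hr]
  simp [Polynomial.algebraMap_eq]

lemma Bmk_sum (m r : ℕ) {ι : Type*} (s : Finset ι) (f : ι → Polynomial ℂ) :
    Bmod.mk m r (∑ i ∈ s, f i) = ∑ i ∈ s, Bmod.mk m r (f i) :=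
  map_sum _ _ _

lemma Bmk_sub (m r : ℕ) (p q : Polynomial ℂ) :
    Bmod.mk m r (p - q) = Bmod.mk m r p - Bmod.mk m r q :=
  map_sub _ _ _

lemma Bmk_mul (m r : ℕ) (p q : Polynomial ℂ) :
    Bmod.mk m r (p * q) = Bmod.mk m r p * Bmod.mk m r q :=
  map_mul _ _ _

lemma smul_B (m r : ℕ) [NeZero m] (a : Amod m) (b : Bmod m r) :
    a • b = AtoB m r a * b := by
  rw [Algebra.smul_def]
  rfl

end S8

/-- If `V` is a free `A`-module of rank `r` and `p : V → B` is a surjective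
`A`-linear map, then any elements `e₀, …, e_{r−1} ∈ V` with `p(eₖ) = wᵏ` form an `A`-basis of
`V`. -/
theorem statement8 (m r : ℕ) (hm : 2 ≤ m) (hr : 1 ≤ r) [NeZero m]
    (V : Type*) [AddCommGroup V] [Module (Amod m) V]
    [Module.Finite (Amod m) V] [Module.Free (Amod m) V]
    (hrank : Module.finrank (Amod m) V = r)
    (p : V →ₗ[Amod m] Bmod m r) (hp : Function.Surjective p)
    (e : Fin r → V) (he : ∀ k : Fin r, p (e k) = Bmod.w m r ^ (k : ℕ)) :
    ∃ b : Module.Basis (Fin r) (Amod m) V, ∀ k, b k = e k := by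
  classical
  haveI : Nontrivial (Amod m) := by
    refine Ideal.Quotient.nontrivial_iff.mpr ?_
    rw [Ne, Ideal.span_singleton_eq_top]
    intro hu
    exact Polynomial.not_isUnit_X ((isUnit_pow_iff (NeZero.ne m)).mp hu)
  let c : Module.Basis (Fin r) (Amod m) V := Module.finBasisOfFinrankEq (Amod m) V hrank
  let f : V →ₗ[Amod m] V := c.constr ℕ e
  let M : Matrix (Fin r) (Fin r) (Amod m) := LinearMap.toMatrix c c f
  have hM : ∀ i k, M i k = c.repr (e k) i := by
    intro i k
    simp [M, f, LinearMap.toMatrix_apply, Module.Basis.constr_basis]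
  have he' : ∀ k, e k = ∑ i, M i k • c i := by
    intro k
    simp_rw [hM]
    exact (c.sum_repr (e k)).symm
  have hdet : (M.map (S8.eps m)).det ≠ 0 := by
    intro h0
    obtain ⟨v, hv, hMv⟩ := Matrix.exists_mulVec_eq_zero_iff.mpr h0
    set u : Fin r → Amod m := fun k => algebraMap ℂ (Amod m) (v k) with hu
    set x : V := ∑ k, u k • e k with hxdef
    set a : Fin r → Amod m := fun i => ∑ k, M i k * u k with ha
    have hx : x = ∑ i, a i • c i := by
      rw [hxdef]
      calc ∑ k, u k • e k
          = ∑ k, ∑ i, (M i k * u k) • c i := by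
            refine Finset.sum_congr rfl fun k _ => ?_
            rw [he' k, Finset.smul_sum]
            refine Finset.sum_congr rfl fun i _ => ?_
            rw [smul_smul, mul_comm]
        _ = ∑ i, ∑ k, (M i k * u k) • c i := Finset.sum_comm
        _ = ∑ i, a i • c i := by
            refine Finset.sum_congr rfl fun i _ => ?_
            rw [ha, Finset.sum_smul]
    have hepsa : ∀ i, S8.eps m (a i) = 0 := by
      intro i
      have h1 := congrFun hMv i
      simp only [Matrix.mulVec, dotProduct, Matrix.map_apply, Pi.zero_apply] at h1
      rw [ha]
      rw [map_sum]
      simpa only [map_mul, hu, S8.eps_algebraMap] using h1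
    choose b hb using fun i => S8.exists_eq_z_mul (hepsa i)
    -- two computations of p x
    have h1 : p x = Bmod.mk m r (∑ k : Fin r, C (v k) * X ^ (k : ℕ)) := by
      rw [hxdef, map_sum, S8.Bmk_sum]
      refine Finset.sum_congr rfl fun k _ => ?_
      rw [map_smul, he k, S8.smul_B, hu, S8.AtoB_algebraMap m r hr, S8.Bmk_pow_w,
        ← S8.Bmk_mul]
    obtain ⟨g, hg⟩ := S8.Bmk_surj m r (∑ i, AtoB m r (b i) * p (c i))
    have h2 : p x = Bmod.mk m r (X ^ r * g) := by
      rw [hx, map_sum]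
      have : ∀ i ∈ Finset.univ, p (a i • c i)
          = AtoB m r (Amod.z m) * (AtoB m r (b i) * p (c i)) := by
        intro i _
        rw [map_smul, S8.smul_B, hb i, map_mul, mul_assoc]
      rw [Finset.sum_congr rfl this, ← Finset.mul_sum, ← hg, S8.AtoB_z m r hr,
        S8.Bmk_pow_w, ← S8.Bmk_mul]
    have key : Bmod.mk m r ((∑ k : Fin r, C (v k) * X ^ (k : ℕ)) - X ^ r * g) = 0 := by
      rw [S8.Bmk_sub, ← h1, ← h2, sub_self]
    have hdvd : (X : Polynomial ℂ) ^ (m * r - r + 1)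
        ∣ ((∑ k : Fin r, C (v k) * X ^ (k : ℕ)) - X ^ r * g) := by
      unfold Bmod.mk at key
      exact Ideal.mem_span_singleton.mp (Ideal.Quotient.eq_zero_iff_mem.mp key)
    obtain ⟨h, hh⟩ := hdvd
    have hrN : r ≤ m * r - r + 1 := by
      have h2r : 2 * r ≤ m * r := Nat.mul_le_mul_right r hm
      omega
    have hvz : ∀ k : Fin r, v k = 0 := by
      intro k
      have hkr : (k : ℕ) < r := k.isLt
      have hc := congrArg (fun q : Polynomial ℂ => q.coeff (k : ℕ)) hh
      simp only [Polynomial.coeff_sub] at hc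
      have hF : (∑ j : Fin r, C (v j) * X ^ (j : ℕ)).coeff (k : ℕ) = v k := by
        rw [Polynomial.finset_sum_coeff]
        rw [Finset.sum_eq_single k]
        · simp
        · intro j _ hjk
          rw [Polynomial.coeff_C_mul, Polynomial.coeff_X_pow,
            if_neg (fun hjj => hjk (Fin.ext hjj.symm)), mul_zero]
        · simp
      have hXg : ((X : Polynomial ℂ) ^ r * g).coeff (k : ℕ) = 0 := by
        rw [mul_comm, Polynomial.coeff_mul_X_pow', if_neg (by omega)]
      have hXh : ((X : Polynomial ℂ) ^ (m * r - r + 1) * h).coeff (k : ℕ) = 0 := by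
        rw [mul_comm, Polynomial.coeff_mul_X_pow', if_neg (by omega)]
      rw [hF, hXg, hXh, sub_zero] at hc
      exact hc
    exact hv (funext hvz)
  have hdet' : IsUnit M.det := by
    refine S8.isUnit_of_eps_ne_zero ?_
    rw [RingHom.map_det]
    simpa [RingHom.mapMatrix_apply] using hdet
  refine ⟨c.map (LinearEquiv.ofIsUnitDet hdet'), fun k => ?_⟩
  rw [Module.Basis.map_apply, LinearEquiv.ofIsUnitDet_apply, Module.Basis.constr_basis]


end
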